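/- Every subalgebra h of the parabolic algebra p = (ℝ ⊕ so(n)) ⋉ ℝⁿ that is solvable is 2-step solvable, i.e. its second derived algebra h⁽²⁾ vanishes. -/

import Mathlib

open Matrix

attribute [local instance 100] LieRing.ofAssociativeRing

/-- Index type for `(n+2) × (n+2)` block matrices with blocks of sizes `1, n, 1`. -/
abbrev PIdx (n : ℕ) := Unit ⊕ (Fin n ⊕ Unit)

/-- The element of the parabolic algebra `p = (ℝ ⊕ so(n)) ⋉ ℝⁿ` corresponding to the
triple `(a, A, v)`, realised as the block matrix `[[a, vᵗ, 0], [0, A, v], [0, 0, -a]]`. -/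
def parabolicEmb (n : ℕ) (a : ℝ) (A : Matrix (Fin n) (Fin n) ℝ) (v : Fin n → ℝ) :
    Matrix (PIdx n) (PIdx n) ℝ :=
  Matrix.of fun i j =>
    match i, j with
    | Sum.inl _, Sum.inl _ => a
    | Sum.inl _, Sum.inr (Sum.inl k) => v k
    | Sum.inl _, Sum.inr (Sum.inr _) => 0
    | Sum.inr (Sum.inl _), Sum.inl _ => 0
    | Sum.inr (Sum.inl k), Sum.inr (Sum.inl l) => A k l
    | Sum.inr (Sum.inl k), Sum.inr (Sum.inr _) => v k
    | Sum.inr (Sum.inr _), Sum.inl _ => 0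
    | Sum.inr (Sum.inr _), Sum.inr (Sum.inl _) => 0
    | Sum.inr (Sum.inr _), Sum.inr (Sum.inr _) => -a


/-- The parabolic algebra `p = (ℝ ⊕ so(n)) ⋉ ℝⁿ`, as a set of block matrices. -/
def parabolicSet (n : ℕ) : Set (Matrix (PIdx n) (PIdx n) ℝ) :=
  {M | ∃ (a : ℝ) (A : Matrix (Fin n) (Fin n) ℝ) (v : Fin n → ℝ), Aᵀ = -A ∧ M = parabolicEmb n a A v}

/-! ### Auxiliary lemmas -/

lemma key_trace_lemma {m : ℕ} (P Q : Matrix (Fin m) (Fin m) ℝ)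
    (hskew : (P * Q - Q * P)ᵀ = -(P * Q - Q * P))
    (hz : (P * Q - Q * P) * P - P * (P * Q - Q * P) = 0) : P * Q - Q * P = 0 := by
  set V := P * Q - Q * P with hV
  have hVP : V * P = P * V := by rwa [sub_eq_zero] at hz
  have htr : Matrix.trace (V * V) = 0 := by
    have e : V * V = (V * P) * Q - (V * Q) * P := by rw [hV]; noncomm_ring
    rw [e, Matrix.trace_sub, Matrix.trace_mul_comm (V * Q) P, hVP, Matrix.mul_assoc, sub_self]
  have h2 : Matrix.trace (V * Vᵀ) = 0 := by
    rw [hskew, Matrix.mul_neg, Matrix.trace_neg, htr, neg_zero]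
  have h3 : ∑ i, ∑ j, (V i j)^2 = 0 := by
    have e : Matrix.trace (V * Vᵀ) = ∑ i, ∑ j, (V i j)^2 := by
      simp [Matrix.trace, Matrix.mul_apply, Matrix.diag, sq]
    rwa [e] at h2
  ext i j
  have h5 := (Finset.sum_eq_zero_iff_of_nonneg (fun i _ => Finset.sum_nonneg
    (fun j _ => sq_nonneg (V i j)))).mp h3 i (Finset.mem_univ i)
  have h6 := (Finset.sum_eq_zero_iff_of_nonneg (fun j _ => sq_nonneg (V i j))).mp h5 j
    (Finset.mem_univ j)
  simpa [pow_eq_zero_iff] using h6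

lemma skew_comm_skew {m : ℕ} {P Q : Matrix (Fin m) (Fin m) ℝ}
    (hP : Pᵀ = -P) (hQ : Qᵀ = -Q) : (P * Q - Q * P)ᵀ = -(P * Q - Q * P) := by
  rw [Matrix.transpose_sub, Matrix.transpose_mul, Matrix.transpose_mul, hP, hQ]
  simp only [Matrix.neg_mul, Matrix.mul_neg, neg_neg, neg_sub]

lemma skew_solvable_abelian {m : ℕ} (k : LieSubalgebra ℝ (Matrix (Fin m) (Fin m) ℝ))
    (hskew : ∀ X ∈ k, Xᵀ = -X) [LieAlgebra.IsSolvable k] :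
    ∀ X ∈ k, ∀ Y ∈ k, X * Y - Y * X = 0 := by
  obtain ⟨N, hN⟩ := LieAlgebra.IsSolvable.solvable (R := ℝ) (L := k)
  suffices habel : LieAlgebra.derivedSeries ℝ k 1 = ⊥ by
    intro X hX Y hY
    have hmem : ⁅(⟨X, hX⟩ : k), (⟨Y, hY⟩ : k)⁆ ∈ LieAlgebra.derivedSeries ℝ k 1 :=
      LieSubmodule.lie_mem_lie (LieSubmodule.mem_top _) (LieSubmodule.mem_top _)
    rw [habel, LieSubmodule.mem_bot] at hmem
    have h2 := congrArg (Subtype.val) hmem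
    simp only [LieSubalgebra.coe_bracket, Ring.lie_def, ZeroMemClass.coe_zero] at h2
    exact h2
  have hsucc : ∀ p : ℕ, LieAlgebra.derivedSeries ℝ k (p + 1) =
      ⁅LieAlgebra.derivedSeries ℝ k p, LieAlgebra.derivedSeries ℝ k p⁆ := by
    intro p
    rw [LieAlgebra.derivedSeries_def, LieAlgebra.derivedSeriesOfIdeal_succ,
      ← LieAlgebra.derivedSeries_def]
  have hstep : ∀ p : ℕ, LieAlgebra.derivedSeries ℝ k (p + 2) = ⊥ →
      LieAlgebra.derivedSeries ℝ k (p + 1) = ⊥ := by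
    intro p htop
    have stage1 : ∀ z ∈ LieAlgebra.derivedSeries ℝ k (p + 1),
        ∀ x ∈ LieAlgebra.derivedSeries ℝ k p, ⁅(z : k), (x : k)⁆ = 0 := by
      intro z hz x hx
      have hVmem : ⁅z, x⁆ ∈ LieAlgebra.derivedSeries ℝ k (p + 1) := by
        have hn : ⁅x, z⁆ ∈ LieAlgebra.derivedSeries ℝ k (p + 1) :=
          (LieAlgebra.derivedSeries ℝ k (p + 1)).lie_mem hz
        have h2 := (LieAlgebra.derivedSeries ℝ k (p + 1)).neg_mem hn
        rw [← lie_skew] at h2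
        simpa using h2
      have hbr : ⁅⁅z, x⁆, z⁆ ∈ LieAlgebra.derivedSeries ℝ k (p + 2) := by
        rw [hsucc (p + 1)]; exact LieSubmodule.lie_mem_lie hVmem hz
      rw [htop, LieSubmodule.mem_bot] at hbr
      have hbr' := congrArg Subtype.val hbr
      simp only [LieSubalgebra.coe_bracket, Ring.lie_def, ZeroMemClass.coe_zero] at hbr'
      have key := key_trace_lemma (z : Matrix (Fin m) (Fin m) ℝ) (x : Matrix (Fin m) (Fin m) ℝ)
        (skew_comm_skew (hskew _ z.2) (hskew _ x.2)) hbr'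
      ext1
      simp only [LieSubalgebra.coe_bracket, Ring.lie_def, ZeroMemClass.coe_zero]
      exact key
    rw [hsucc p, LieSubmodule.lie_eq_bot_iff]
    intro x hx y hy
    have hZmem : ⁅x, y⁆ ∈ LieAlgebra.derivedSeries ℝ k (p + 1) := by
      rw [hsucc p]
      exact LieSubmodule.lie_mem_lie hx hy
    have hzero := stage1 _ hZmem x hx
    have hzero' := congrArg Subtype.val hzero
    simp only [LieSubalgebra.coe_bracket, Ring.lie_def, ZeroMemClass.coe_zero] at hzero'
    have key := key_trace_lemma (x : Matrix (Fin m) (Fin m) ℝ) (y : Matrix (Fin m) (Fin m) ℝ)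
      (skew_comm_skew (hskew _ x.2) (hskew _ y.2)) hzero'
    ext1
    simp only [LieSubalgebra.coe_bracket, Ring.lie_def, ZeroMemClass.coe_zero]
    exact key
  have hdown : ∀ p : ℕ, LieAlgebra.derivedSeries ℝ k (p + 1) = ⊥ →
      LieAlgebra.derivedSeries ℝ k 1 = ⊥ := by
    intro p
    induction p with
    | zero => exact id
    | succ q ih => intro hq; exact ih (hstep q hq)
  cases N with
  | zero =>
    apply hdown 0
    rw [eq_bot_iff] at hN ⊢
    exact le_trans (LieAlgebra.derivedSeriesOfIdeal_le_self _ _) hN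
  | succ p => exact hdown p hN

/-- Projection onto the middle `n × n` block. -/
def pPhi (n : ℕ) (M : Matrix (PIdx n) (PIdx n) ℝ) : Matrix (Fin n) (Fin n) ℝ :=
  Matrix.of fun k l => M (Sum.inr (Sum.inl k)) (Sum.inr (Sum.inl l))

lemma pPhi_emb (n : ℕ) (a : ℝ) (A : Matrix (Fin n) (Fin n) ℝ) (v : Fin n → ℝ) :
    pPhi n (parabolicEmb n a A v) = A := rfl

lemma pPhi_mul (n : ℕ) (a b : ℝ) (A B : Matrix (Fin n) (Fin n) ℝ) (v w : Fin n → ℝ) :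
    pPhi n (parabolicEmb n a A v * parabolicEmb n b B w) = A * B := by
  ext k l
  simp [pPhi, Matrix.mul_apply, parabolicEmb, Fintype.sum_sum_type]

lemma corner_mul (n : ℕ) (a b : ℝ) (A B : Matrix (Fin n) (Fin n) ℝ) (v w : Fin n → ℝ) :
    (parabolicEmb n a A v * parabolicEmb n b B w) (Sum.inl ()) (Sum.inl ()) = a * b := by
  simp [Matrix.mul_apply, parabolicEmb, Fintype.sum_sum_type]

lemma nil_comm (n : ℕ) (v w : Fin n → ℝ) :
    parabolicEmb n 0 0 v * parabolicEmb n 0 0 w =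
    parabolicEmb n 0 0 w * parabolicEmb n 0 0 v := by
  ext i j
  rcases i with _ | k | _ <;> rcases j with _ | l | _ <;>
    simp [Matrix.mul_apply, parabolicEmb, Fintype.sum_sum_type, mul_comm]

/-- The projection `h → gl(n)`, as a morphism of Lie algebras. -/
def pPhiHom (n : ℕ) (h : LieSubalgebra ℝ (Matrix (PIdx n) (PIdx n) ℝ))
    (hsub : (h : Set (Matrix (PIdx n) (PIdx n) ℝ)) ⊆ parabolicSet n) :
    h →ₗ⁅ℝ⁆ Matrix (Fin n) (Fin n) ℝ where
  toFun x := pPhi n (x : Matrix (PIdx n) (PIdx n) ℝ)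
  map_add' x y := rfl
  map_smul' c x := rfl
  map_lie' {x y} := by
    obtain ⟨a, A, v, hA, hx⟩ := hsub x.2
    obtain ⟨b, B, w, hB, hy⟩ := hsub y.2
    have hcoe : ((⁅x, y⁆ : h) : Matrix (PIdx n) (PIdx n) ℝ) =
        (x : Matrix (PIdx n) (PIdx n) ℝ) * y - (y : Matrix (PIdx n) (PIdx n) ℝ) * x := by
      rw [LieSubalgebra.coe_bracket, Ring.lie_def]
    have hsub' : pPhi n (parabolicEmb n a A v * parabolicEmb n b B w -
        parabolicEmb n b B w * parabolicEmb n a A v) =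
        pPhi n (parabolicEmb n a A v * parabolicEmb n b B w) -
        pPhi n (parabolicEmb n b B w * parabolicEmb n a A v) := rfl
    show pPhi n ((⁅x, y⁆ : h) : Matrix (PIdx n) (PIdx n) ℝ) =
        pPhi n (x : Matrix (PIdx n) (PIdx n) ℝ) * pPhi n (y : Matrix (PIdx n) (PIdx n) ℝ) -
        pPhi n (y : Matrix (PIdx n) (PIdx n) ℝ) * pPhi n (x : Matrix (PIdx n) (PIdx n) ℝ)
    rw [hcoe, hx, hy, hsub', pPhi_mul, pPhi_mul, pPhi_emb, pPhi_emb]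

/-- Every solvable subalgebra `h` of the parabolic algebra `p = (ℝ ⊕ so(n)) ⋉ ℝⁿ`
is 2-step solvable: its second derived algebra `h⁽²⁾` vanishes. -/
theorem solvable_parabolic_subalgebra_two_step (n : ℕ)
    (h : LieSubalgebra ℝ (Matrix (PIdx n) (PIdx n) ℝ))
    (hsub : (h : Set (Matrix (PIdx n) (PIdx n) ℝ)) ⊆ parabolicSet n)
    (hsolv : LieAlgebra.IsSolvable h) :
    LieAlgebra.derivedSeries ℝ h 2 = ⊥ := by
  haveI := hsolv
  set f := pPhiHom n h hsub with hf
  haveI : LieAlgebra.IsSolvable f.range := f.isSolvable_range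
  -- the range of f consists of skew-symmetric matrices
  have hskewrange : ∀ X ∈ f.range, Xᵀ = -X := by
    rintro X ⟨y, rfl⟩
    obtain ⟨a, A, v, hA, hy⟩ := hsub y.2
    show (pPhi n (y : Matrix (PIdx n) (PIdx n) ℝ))ᵀ = -pPhi n (y : Matrix (PIdx n) (PIdx n) ℝ)
    rw [hy, pPhi_emb]
    exact hA
  have habel := skew_solvable_abelian f.range hskewrange
  -- hence the phi-parts of elements of h commute
  have hcomm : ∀ x y : h, pPhi n (x : Matrix (PIdx n) (PIdx n) ℝ) *
      pPhi n (y : Matrix (PIdx n) (PIdx n) ℝ) -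
      pPhi n (y : Matrix (PIdx n) (PIdx n) ℝ) *
      pPhi n (x : Matrix (PIdx n) (PIdx n) ℝ) = 0 := by
    intro x y
    exact habel _ ⟨x, rfl⟩ _ ⟨y, rfl⟩
  have hsucc : ∀ p : ℕ, LieAlgebra.derivedSeries ℝ h (p + 1) =
      ⁅LieAlgebra.derivedSeries ℝ h p, LieAlgebra.derivedSeries ℝ h p⁆ := by
    intro p
    rw [LieAlgebra.derivedSeries_def, LieAlgebra.derivedSeriesOfIdeal_succ,
      ← LieAlgebra.derivedSeries_def]
  -- every element of the first derived algebra has vanishing a- and A-components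
  have hD1 : ∀ x : h, x ∈ LieAlgebra.derivedSeries ℝ h 1 →
      (x : Matrix (PIdx n) (PIdx n) ℝ) (Sum.inl ()) (Sum.inl ()) = 0 ∧
      pPhi n (x : Matrix (PIdx n) (PIdx n) ℝ) = 0 := by
    intro x hx
    rw [hsucc 0] at hx
    have hx' : x ∈ (⁅LieAlgebra.derivedSeries ℝ h 0, LieAlgebra.derivedSeries ℝ h 0⁆ :
        LieIdeal ℝ h).toSubmodule := hx
    rw [LieSubmodule.lieIdeal_oper_eq_linear_span] at hx'
    refine Submodule.span_induction ?_ ?_ ?_ ?_ hx'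
    · rintro m ⟨z, w, rfl⟩
      obtain ⟨a, A, v, hA, hz⟩ := hsub (z : h).2
      obtain ⟨b, B, w', hB, hw⟩ := hsub (w : h).2
      have hcoe : ((⁅(z : h), (w : h)⁆ : h) : Matrix (PIdx n) (PIdx n) ℝ) =
          ((z : h) : Matrix (PIdx n) (PIdx n) ℝ) * ((w : h) : Matrix (PIdx n) (PIdx n) ℝ) -
          ((w : h) : Matrix (PIdx n) (PIdx n) ℝ) * ((z : h) : Matrix (PIdx n) (PIdx n) ℝ) := by
        rw [LieSubalgebra.coe_bracket, Ring.lie_def]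
      constructor
      · rw [hcoe, Matrix.sub_apply, hz, hw, corner_mul, corner_mul, mul_comm, sub_self]
      · have hphi : pPhi n (((⁅(z : h), (w : h)⁆ : h)) : Matrix (PIdx n) (PIdx n) ℝ) =
            pPhi n (((z : h) : Matrix (PIdx n) (PIdx n) ℝ) * ((w : h) : Matrix (PIdx n) (PIdx n) ℝ)) -
            pPhi n (((w : h) : Matrix (PIdx n) (PIdx n) ℝ) * ((z : h) : Matrix (PIdx n) (PIdx n) ℝ)) := by
          rw [hcoe]; rfl
        rw [hphi, hz, hw, pPhi_mul, pPhi_mul]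
        have := hcomm (z : h) (w : h)
        rw [hz, hw, pPhi_emb, pPhi_emb] at this
        exact this
    · exact ⟨rfl, rfl⟩
    · rintro x y _ _ ⟨hx1, hx2⟩ ⟨hy1, hy2⟩
      constructor
      · show ((x : Matrix (PIdx n) (PIdx n) ℝ) + y) (Sum.inl ()) (Sum.inl ()) = 0
        rw [Matrix.add_apply, hx1, hy1, add_zero]
      · show pPhi n ((x : Matrix (PIdx n) (PIdx n) ℝ) + y) = 0
        have : pPhi n ((x : Matrix (PIdx n) (PIdx n) ℝ) + y) = pPhi n x + pPhi n y := rfl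
        rw [this, hx2, hy2, add_zero]
    · rintro c x _ ⟨hx1, hx2⟩
      constructor
      · show (c • (x : Matrix (PIdx n) (PIdx n) ℝ)) (Sum.inl ()) (Sum.inl ()) = 0
        rw [Matrix.smul_apply, hx1, smul_zero]
      · show pPhi n (c • (x : Matrix (PIdx n) (PIdx n) ℝ)) = 0
        have : pPhi n (c • (x : Matrix (PIdx n) (PIdx n) ℝ)) = c • pPhi n x := rfl
        rw [this, hx2, smul_zero]
  -- elements of the derived algebra are "pure translations", which commute
  rw [hsucc 1, LieSubmodule.lie_eq_bot_iff]
  intro x hx y hy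
  obtain ⟨hxa, hxA⟩ := hD1 x hx
  obtain ⟨hya, hyA⟩ := hD1 y hy
  obtain ⟨a, A, v, hA, hxval⟩ := hsub x.2
  obtain ⟨b, B, w, hB, hyval⟩ := hsub y.2
  have ha0 : a = 0 := by rw [hxval] at hxa; exact hxa
  have hA0 : A = 0 := by rw [hxval, pPhi_emb] at hxA; exact hxA
  have hb0 : b = 0 := by rw [hyval] at hya; exact hya
  have hB0 : B = 0 := by rw [hyval, pPhi_emb] at hyA; exact hyA
  rw [ha0, hA0] at hxval
  rw [hb0, hB0] at hyval
  ext1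
  simp only [LieSubalgebra.coe_bracket, Ring.lie_def, ZeroMemClass.coe_zero]
  rw [hxval, hyval, nil_comm, sub_self]
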